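/- arXiv:2306.11835 — 2 statements merged into one kernel-verified Lean document; each statement's English description precedes it below -/
import Mathlib

section
/- In Euclidean space ℝⁿ, let x, y be two points, let m = (x+y)/2 be their midpoint, and let D be the set of points p with d(p, m) ≤ r lying in the hyperplane through m perpendicular to y − x. Then any continuous rectifiable path from x to y that does not intersect D has length strictly greater than 2·√((d(x,y)/2)² + r²). -/
open Set Metric

noncomputable def pathLength {V : Type*} [PseudoEMetricSpace V] {x y : V} (γ : Path x y) : ENNReal :=
  eVariationOn (fun t => γ t) Set.univ

noncomputable def pathInf {V : Type*} [PseudoEMetricSpace V] (K : Set V) (x y : V) : ENNReal :=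
  ⨅ γ : {γ : Path x y // Set.range γ ⊆ K}, pathLength γ.1

noncomputable def rho {V : Type*} [PseudoEMetricSpace V] (K : Set V) (x y : V) : ENNReal :=
  pathInf K x y / 2

theorem stmt3 {n : ℕ} (hn : 1 ≤ n) (x y : EuclideanSpace ℝ (Fin n)) (hxy : x ≠ y)
    (r : ℝ) (hr : 0 < r)
    (D : Set (EuclideanSpace ℝ (Fin n)))
    (hD : D = {p | dist p (midpoint ℝ x y) ≤ r ∧
      inner ℝ (p - midpoint ℝ x y) (y - x) = (0 : ℝ)})
    (γ : Path x y) (hγ : Set.range γ ∩ D = ∅) :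
    ENNReal.ofReal (2 * Real.sqrt ((dist x y / 2) ^ 2 + r ^ 2)) < pathLength γ := by
  set m := midpoint ℝ x y with hm
  have hxm : x - m = (-(2⁻¹ : ℝ)) • (y - x) := by
    rw [hm, midpoint_eq_smul_add, invOf_eq_inv]; module
  have hym : y - m = ((2⁻¹ : ℝ)) • (y - x) := by
    rw [hm, midpoint_eq_smul_add, invOf_eq_inv]; module
  have hyx : (0:ℝ) < ‖y - x‖ ^ 2 :=
    pow_pos (norm_pos_iff.mpr (sub_ne_zero.mpr (Ne.symm hxy))) 2
  have hcont : Continuous fun s : ℝ => (inner ℝ (γ.extend s - m) (y - x) : ℝ) :=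
    (γ.continuous_extend.sub continuous_const).inner continuous_const
  have h0 : (inner ℝ (γ.extend 0 - m) (y - x) : ℝ) = -(2⁻¹ * ‖y - x‖ ^ 2) := by
    rw [γ.extend_zero, hxm, real_inner_smul_left, real_inner_self_eq_norm_sq]; ring
  have h1 : (inner ℝ (γ.extend 1 - m) (y - x) : ℝ) = 2⁻¹ * ‖y - x‖ ^ 2 := by
    rw [γ.extend_one, hym, real_inner_smul_left, real_inner_self_eq_norm_sq]
  obtain ⟨c, hc, hgc⟩ : ∃ c ∈ Icc (0:ℝ) 1, (inner ℝ (γ.extend c - m) (y - x) : ℝ) = 0 := by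
    have := intermediate_value_Icc (by norm_num : (0:ℝ) ≤ 1) hcont.continuousOn
    have h0' : (0:ℝ) ∈ Icc (inner ℝ (γ.extend 0 - m) (y - x) : ℝ)
        (inner ℝ (γ.extend 1 - m) (y - x) : ℝ) := by
      rw [h0, h1]; constructor <;> nlinarith
    obtain ⟨c, hc, hgc⟩ := this h0'
    exact ⟨c, hc, hgc⟩
  set t : unitInterval := ⟨c, hc⟩ with ht
  set p := γ t with hp
  have hpe : γ.extend c = p := γ.extend_apply hc
  have hp_inner : (inner ℝ (p - m) (y - x) : ℝ) = 0 := by rw [← hpe]; exact hgc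
  have hpD : p ∉ D := by
    intro hpD
    have : p ∈ Set.range γ ∩ D := ⟨⟨t, rfl⟩, hpD⟩
    rw [hγ] at this; exact this
  have hpm : r < dist p m := by
    by_contra h
    exact hpD (by rw [hD]; exact ⟨le_of_not_gt h, hp_inner⟩)
  -- Pythagoras key
  have key : ∀ a : EuclideanSpace ℝ (Fin n), (inner ℝ (a - m) (p - m) : ℝ) = 0 →
      dist a m = dist x y / 2 →
      Real.sqrt ((dist x y / 2) ^ 2 + r ^ 2) < dist a p := by
    intro a hortho hdist
    have hsq : dist a p ^ 2 = dist a m ^ 2 + dist p m ^ 2 := by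
      have : a - p = (a - m) - (p - m) := by abel
      rw [dist_eq_norm, this, norm_sub_sq_real, hortho, dist_eq_norm, dist_eq_norm]
      ring
    have h2 : (dist x y / 2) ^ 2 + r ^ 2 < dist a p ^ 2 := by
      rw [hsq, hdist]
      have : r ^ 2 < dist p m ^ 2 := by nlinarith [dist_nonneg (x := p) (y := m)]
      linarith
    calc Real.sqrt ((dist x y / 2) ^ 2 + r ^ 2) < Real.sqrt (dist a p ^ 2) := by
          apply Real.sqrt_lt_sqrt (by positivity) h2
      _ = dist a p := Real.sqrt_sq dist_nonneg
  have hxp : Real.sqrt ((dist x y / 2) ^ 2 + r ^ 2) < dist x p := by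
    apply key
    · rw [hxm, real_inner_smul_left, real_inner_comm, hp_inner]; ring
    · rw [hm, dist_left_midpoint]; norm_num; ring
  have hyp : Real.sqrt ((dist x y / 2) ^ 2 + r ^ 2) < dist y p := by
    apply key
    · rw [hym, real_inner_smul_left, real_inner_comm, hp_inner]; ring
    · rw [hm, dist_right_midpoint]; norm_num; rw [dist_comm]; ring
  -- variation lower bound
  have hlen : edist x p + edist p y ≤ pathLength γ := by
    have hsum := eVariationOn.sum_le (f := fun s => γ s) (s := (Set.univ : Set unitInterval)) (n := 2)
      (u := fun i => if i = 0 then 0 else if i = 1 then t else 1)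
      (by
        apply monotone_nat_of_le_succ
        intro i
        match i with
        | 0 => simpa using unitInterval.nonneg'
        | 1 => simpa using unitInterval.le_one'
        | (k+2) => simp)
      (fun _ => Set.mem_univ _)
    simp only [Finset.sum_range_succ, Finset.sum_range_zero] at hsum
    norm_num at hsum
    have heq : edist x p + edist p y = edist (γ t) x + edist y (γ t) := by
      rw [edist_comm x p, edist_comm p y, hp]
    rw [heq]
    exact hsum
  have hfin : ENNReal.ofReal (2 * Real.sqrt ((dist x y / 2) ^ 2 + r ^ 2))
      < edist x p + edist p y := by
    rw [edist_dist, edist_dist, ← ENNReal.ofReal_add dist_nonneg dist_nonneg]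
    rw [ENNReal.ofReal_lt_ofReal_iff_of_nonneg (by positivity)]
    have h2 := hyp
    rw [dist_comm y p] at h2
    linarith
  exact lt_of_lt_of_le hfin hlen
end

section
/- Under the hypotheses of the K-perturbation lemma (bijection f : X → X' with K-paths of length ≤ κ joining x to f(x)), the parallax edge sets satisfy the interleaving: if edge (x,y) ∈ P_{α,ε}(X), then edge (f(x), f(y)) ∈ P_{α+κ, ε+2κ}(X'), where P_{α,ε}(X) = {(x,y) ∈ X×X : ρ_K(x,y) ≤ α and ρ_K(x,y) ≤ ρ_V(x,y) + ε}. -/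
open Set Metric

lemma pathLength_symm {V : Type*} [PseudoEMetricSpace V] {x y : V} (γ : Path x y) :
    pathLength γ.symm = pathLength γ := by
  have h : eVariationOn (fun t => γ t) (unitInterval.symm '' univ)
      = eVariationOn (fun t => γ t) univ := by
    congr 1
    ext t
    simp only [image_univ, mem_range, mem_univ, iff_true]
    exact ⟨unitInterval.symm t, unitInterval.symm_symm t⟩
  calc pathLength γ.symm
      = eVariationOn ((fun t => γ t) ∘ unitInterval.symm) univ := rfl
    _ = eVariationOn (fun t => γ t) (unitInterval.symm '' univ) := by
        apply eVariationOn.comp_eq_of_antitoneOn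
        intro a _ b _ hab
        have hab' := Subtype.coe_le_coe.2 hab
        show unitInterval.symm b ≤ unitInterval.symm a
        simp only [unitInterval.symm]
        exact Subtype.mk_le_mk.2 (by linarith)
    _ = pathLength γ := h

lemma edist_le_pathLength {V : Type*} [PseudoEMetricSpace V] {x y : V} (γ : Path x y) :
    edist x y ≤ pathLength γ := by
  have := eVariationOn.edist_le (fun t => γ t) (mem_univ (0 : unitInterval)) (mem_univ 1)
  simpa [pathLength] using this

lemma pathLength_trans_le {V : Type*} [PseudoEMetricSpace V] {x y z : V}
    (γ : Path x y) (δ : Path y z) :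
    pathLength (γ.trans δ) ≤ pathLength γ + pathLength δ := by
  classical
  set h : unitInterval := ⟨1/2, by norm_num, by norm_num⟩
  have hsplit : (univ : Set unitInterval) = {t : unitInterval | (t:ℝ) ≤ 1/2} ∪ {t : unitInterval | 1/2 ≤ (t:ℝ)} := by
    ext t
    simp only [mem_univ, mem_union, mem_setOf_eq, true_iff]
    exact le_total (t:ℝ) (1/2)
  have hgre : IsGreatest {t : unitInterval | (t:ℝ) ≤ 1/2} h :=
    ⟨by norm_num [h], fun t ht => Subtype.coe_le_coe.1 ht⟩
  have hlea : IsLeast {t : unitInterval | 1/2 ≤ (t:ℝ)} h :=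
    ⟨by norm_num [h], fun t ht => Subtype.coe_le_coe.1 ht⟩
  have key := eVariationOn.union (fun t => (γ.trans δ) t) hgre hlea
  rw [pathLength, hsplit, key]
  gcongr
  · -- first piece
    set φ : unitInterval → unitInterval := fun t => ⟨min (2*t) 1, by
      constructor
      · simp only [le_min_iff]
        refine ⟨by nlinarith [t.2.1], by norm_num⟩
      · exact min_le_right _ _⟩
    have heq : EqOn (fun t => (γ.trans δ) t) ((fun t => γ t) ∘ φ) {t : unitInterval | (t:ℝ) ≤ 1/2} := by
      intro t ht
      simp only [mem_setOf_eq] at ht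
      simp only [Function.comp_apply, Path.trans_apply, dif_pos ht]
      congr 1
      exact Subtype.ext (by simp only [φ]; rw [min_eq_left (by linarith)])
    rw [eVariationOn.eq_of_eqOn heq]
    exact eVariationOn.comp_le_of_monotoneOn _ φ
      (fun a _ b _ hab => Subtype.mk_le_mk.2
        (min_le_min (by nlinarith [Subtype.coe_le_coe.2 hab]) le_rfl))
      (mapsTo_univ _ _)
  · set φ : unitInterval → unitInterval := fun t => ⟨max (2*t-1) 0, by
      constructor
      · exact le_max_right _ _
      · simp only [max_le_iff]
        refine ⟨by nlinarith [t.2.2], by norm_num⟩⟩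
    have heq : EqOn (fun t => (γ.trans δ) t) ((fun t => δ t) ∘ φ) {t : unitInterval | 1/2 ≤ (t:ℝ)} := by
      intro t ht
      simp only [mem_setOf_eq] at ht
      by_cases h2 : (t:ℝ) ≤ 1/2
      · have ht2 : (t:ℝ) = 1/2 := le_antisymm h2 ht
        simp only [Function.comp_apply, Path.trans_apply, dif_pos h2, φ]
        have e1 : γ ⟨2*(t:ℝ), (unitInterval.mul_pos_mem_iff zero_lt_two).2 ⟨t.2.1, h2⟩⟩ = y := by
          have h3 : (⟨2*(t:ℝ), (unitInterval.mul_pos_mem_iff zero_lt_two).2 ⟨t.2.1, h2⟩⟩ : unitInterval) = 1 := by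
            ext; simp [ht2]
          rw [h3, γ.target]
        have e2 : δ (φ t) = y := by
          have h4 : φ t = 0 := by
            ext; simp only [φ]; rw [max_eq_right (by linarith)]; rfl
          rw [h4, δ.source]
        rw [e1, e2]
      · simp only [Function.comp_apply, Path.trans_apply, dif_neg h2, φ]
        congr 1
        exact Subtype.ext (by simp only [φ]; rw [max_eq_left (by push_neg at h2; linarith)])
    rw [eVariationOn.eq_of_eqOn heq]
    exact eVariationOn.comp_le_of_monotoneOn _ φ
      (fun a _ b _ hab => Subtype.mk_le_mk.2
        (max_le_max (by nlinarith [Subtype.coe_le_coe.2 hab]) le_rfl))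
      (mapsTo_univ _ _)

lemma pathInf_le {V : Type*} [PseudoEMetricSpace V] {K : Set V} {x y : V}
    (γ : Path x y) (hγ : Set.range γ ⊆ K) : pathInf K x y ≤ pathLength γ :=
  iInf_le _ (⟨γ, hγ⟩ : {γ : Path x y // Set.range γ ⊆ K})

theorem stmt12 {V : Type*} [MetricSpace V]
    (hgeo : ∀ x y : V, ∃ γ : Path x y, pathLength γ = edist x y)
    (K X X' : Set V) (hXK : X ⊆ K) (hX'K : X' ⊆ K) (hX : X.Finite) (hX' : X'.Finite)
    (f : V → V) (hbij : Set.BijOn f X X') (κ : ℝ) (hκ : 0 ≤ κ)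
    (hf : ∀ x ∈ X, ∃ γ : Path x (f x), Set.range γ ⊆ K ∧ pathLength γ ≤ ENNReal.ofReal κ)
    (α ε : ℝ) (hα : 0 ≤ α) (hε : 0 ≤ ε)
    (x y : V) (hx : x ∈ X) (hy : y ∈ X)
    (h1 : rho K x y ≤ ENNReal.ofReal α)
    (h2 : rho K x y ≤ edist x y / 2 + ENNReal.ofReal ε) :
    rho K (f x) (f y) ≤ ENNReal.ofReal (α + κ) ∧
      rho K (f x) (f y) ≤ edist (f x) (f y) / 2 + ENNReal.ofReal (ε + 2 * κ) := by
  obtain ⟨γx, hγxK, hγxl⟩ := hf x hx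
  obtain ⟨γy, hγyK, hγyl⟩ := hf y hy
  have hdx : edist x (f x) ≤ ENNReal.ofReal κ := (edist_le_pathLength γx).trans hγxl
  have hdy : edist y (f y) ≤ ENNReal.ofReal κ := (edist_le_pathLength γy).trans hγyl
  have h2k : ENNReal.ofReal (2*κ) = ENNReal.ofReal κ + ENNReal.ofReal κ := by
    rw [two_mul, ENNReal.ofReal_add hκ hκ]
  have h2kd : ENNReal.ofReal (2*κ) / 2 = ENNReal.ofReal κ := by
    rw [h2k, ← mul_two, mul_div_assoc, ENNReal.div_self two_ne_zero ENNReal.ofNat_ne_top, mul_one]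
  -- key inequality on pathInf
  have hkey : pathInf K (f x) (f y) ≤ pathInf K x y + ENNReal.ofReal (2*κ) := by
    simp only [pathInf]
    rw [ENNReal.iInf_add]
    refine le_iInf fun γ => ?_
    refine iInf_le_of_le ⟨γx.symm.trans (γ.1.trans γy), ?_⟩ ?_
    · rw [Path.trans_range, Path.symm_range, Path.trans_range]
      exact union_subset hγxK (union_subset γ.2 hγyK)
    · calc pathLength (γx.symm.trans (γ.1.trans γy))
          ≤ pathLength γx.symm + pathLength (γ.1.trans γy) := pathLength_trans_le _ _
        _ ≤ pathLength γx.symm + (pathLength γ.1 + pathLength γy) :=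
            add_le_add le_rfl (pathLength_trans_le _ _)
        _ = pathLength γx + (pathLength γ.1 + pathLength γy) := by rw [pathLength_symm]
        _ ≤ ENNReal.ofReal κ + (pathLength γ.1 + ENNReal.ofReal κ) :=
            add_le_add hγxl (add_le_add le_rfl hγyl)
        _ = pathLength γ.1 + ENNReal.ofReal (2*κ) := by rw [h2k]; abel
  have hr : rho K (f x) (f y) ≤ rho K x y + ENNReal.ofReal κ := by
    rw [rho, rho, ← h2kd, ← ENNReal.add_div]
    exact ENNReal.div_le_div_right hkey 2
  have hdd : edist x y ≤ edist (f x) (f y) + ENNReal.ofReal (2*κ) := by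
    calc edist x y ≤ edist x (f x) + edist (f x) (f y) + edist (f y) y := edist_triangle4 _ _ _ _
      _ ≤ ENNReal.ofReal κ + edist (f x) (f y) + ENNReal.ofReal κ := by
          refine add_le_add (add_le_add hdx le_rfl) ?_
          rw [edist_comm]; exact hdy
      _ = edist (f x) (f y) + ENNReal.ofReal (2*κ) := by rw [h2k]; abel
  constructor
  · calc rho K (f x) (f y) ≤ rho K x y + ENNReal.ofReal κ := hr
      _ ≤ ENNReal.ofReal α + ENNReal.ofReal κ := add_le_add h1 le_rfl
      _ = ENNReal.ofReal (α + κ) := (ENNReal.ofReal_add hα hκ).symm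
  · calc rho K (f x) (f y) ≤ rho K x y + ENNReal.ofReal κ := hr
      _ ≤ (edist x y / 2 + ENNReal.ofReal ε) + ENNReal.ofReal κ := add_le_add h2 le_rfl
      _ ≤ ((edist (f x) (f y) + ENNReal.ofReal (2*κ)) / 2 + ENNReal.ofReal ε)
            + ENNReal.ofReal κ := by gcongr
      _ = edist (f x) (f y) / 2 + ENNReal.ofReal (ε + 2 * κ) := by
          rw [ENNReal.add_div, h2kd, ENNReal.ofReal_add hε (by positivity), h2k]
          abel
end
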